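/- Let G be a full DAG with an ample framing F, and suppose G has no idle edges. Then the number of exceptional routes of [G,F] equals the sum of the out-degrees of the sources of G, which also equals the sum of the in-degrees of the sinks of G. In particular, this number is independent of the choice of ample framing. -/

import Mathlib

/-- A finite directed acyclic multigraph. -/
structure DAG where
  V : Type
  E : Type
  [fintypeV : Fintype V]
  [fintypeE : Fintype E]
  [decEqV : DecidableEq V]
  [decEqE : DecidableEq E]
  src : E → V
  tgt : E → V
  acyclic : ∀ v : V,
    ¬ Relation.TransGen (fun a b : V => ∃ e : E, src e = a ∧ tgt e = b) v v

attribute [instance] DAG.fintypeV DAG.fintypeE DAG.decEqV DAG.decEqE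

namespace DAG

variable (G : DAG)

/-- A vertex with no incoming edges. -/
def IsSource (v : G.V) : Prop := ∀ e : G.E, G.tgt e ≠ v

/-- A vertex with no outgoing edges. -/
def IsSink (v : G.V) : Prop := ∀ e : G.E, G.src e ≠ v

/-- An inner vertex is neither a source nor a sink. -/
def IsInner (v : G.V) : Prop := ¬ G.IsSource v ∧ ¬ G.IsSink v

instance : DecidablePred G.IsSource := fun v =>
  decidable_of_iff (∀ e : G.E, G.tgt e ≠ v) Iff.rfl

instance : DecidablePred G.IsSink := fun v =>
  decidable_of_iff (∀ e : G.E, G.src e ≠ v) Iff.rfl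

instance : DecidablePred G.IsInner := fun v =>
  decidable_of_iff (¬ G.IsSource v ∧ ¬ G.IsSink v) Iff.rfl

/-- In-degree: the number of edges with target `v`. -/
def indeg (v : G.V) : ℕ := Fintype.card {e : G.E // G.tgt e = v}

/-- Out-degree: the number of edges with source `v`. -/
def outdeg (v : G.V) : ℕ := Fintype.card {e : G.E // G.src e = v}

/-- A DAG is full if every inner vertex has in-degree 2 and out-degree 2. -/
def Full : Prop := ∀ v : G.V, G.IsInner v → G.indeg v = 2 ∧ G.outdeg v = 2

/-- A route: a maximal directed path, i.e. a nonempty list of consecutive edges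
starting at a source and ending at a sink. -/
structure Route where
  edges : List G.E
  ne : edges ≠ []
  chain : edges.Chain' (fun e f => G.tgt e = G.src f)
  source_start : G.IsSource (G.src (edges.head ne))
  sink_end : G.IsSink (G.tgt (edges.getLast ne))

/-- A route visits a vertex if the vertex is an endpoint of one of its edges. -/
def Route.visits (R : G.Route) (v : G.V) : Prop :=
  ∃ e ∈ R.edges, G.src e = v ∨ G.tgt e = v

/-- A framing: a linear order on the incoming edges and a linear order on the
outgoing edges of every inner vertex. -/
structure Framing where
  inlt : G.E → G.E → Prop
  outlt : G.E → G.E → Prop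
  inlt_tgt : ∀ {e f}, inlt e f → G.tgt e = G.tgt f
  inlt_inner : ∀ {e f}, inlt e f → G.IsInner (G.tgt e)
  inlt_irrefl : ∀ e, ¬ inlt e e
  inlt_trans : ∀ {e f g}, inlt e f → inlt f g → inlt e g
  inlt_total : ∀ e f, G.tgt e = G.tgt f → G.IsInner (G.tgt e) → e ≠ f →
    inlt e f ∨ inlt f e
  outlt_src : ∀ {e f}, outlt e f → G.src e = G.src f
  outlt_inner : ∀ {e f}, outlt e f → G.IsInner (G.src e)
  outlt_irrefl : ∀ e, ¬ outlt e e
  outlt_trans : ∀ {e f g}, outlt e f → outlt f g → outlt e g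
  outlt_total : ∀ e f, G.src e = G.src f → G.IsInner (G.src e) → e ≠ f →
    outlt e f ∨ outlt f e

/-- The induced order on paths ending at a common vertex: compare the two edges
just before the longest common suffix. -/
def inPathLt (F : G.Framing) (P Q : List G.E) : Prop :=
  ∃ (p q s : List G.E) (e f : G.E), e ≠ f ∧
    P = p ++ e :: s ∧ Q = q ++ f :: s ∧ F.inlt e f

/-- The induced order on paths starting at a common vertex: compare the two edges
just after the longest common prefix. -/
def outPathLt (F : G.Framing) (P Q : List G.E) : Prop :=
  ∃ (s p q : List G.E) (e f : G.E), e ≠ f ∧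
    P = s ++ e :: p ∧ Q = s ++ f :: q ∧ F.outlt e f

/-- Routes `P` and `Q` are in conflict (with `P` playing the first role) if they
pass through a common inner vertex `v` with `Pv ≺ Qv` in the in-order and
`vQ ≺ vP` in the out-order. -/
def Conflict (F : G.Framing) (P Q : G.Route) : Prop :=
  ∃ (v : G.V) (a b c d : List G.E) (ea ec : G.E),
    P.edges = a ++ [ea] ++ b ∧ Q.edges = c ++ [ec] ++ d ∧
    G.tgt ea = v ∧ G.tgt ec = v ∧ b ≠ [] ∧ d ≠ [] ∧
    G.inPathLt F (a ++ [ea]) (c ++ [ec]) ∧ G.outPathLt F d b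

/-- Two routes are coherent if they are not in conflict at any common inner
vertex (in either order). -/
def CoherentPair (F : G.Framing) (P Q : G.Route) : Prop :=
  ¬ G.Conflict F P Q ∧ ¬ G.Conflict F Q P

/-- A route is exceptional if it is coherent with every route. -/
def Exceptional (F : G.Framing) (R : G.Route) : Prop :=
  ∀ S : G.Route, G.CoherentPair F R S

/-- An edge is idle if it is the unique incoming or the unique outgoing edge of
an inner vertex. -/
def Idle (e : G.E) : Prop :=
  (G.IsInner (G.tgt e) ∧ ∀ f : G.E, G.tgt f = G.tgt e → f = e) ∨
  (G.IsInner (G.src e) ∧ ∀ f : G.E, G.src f = G.src e → f = e)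

/-- A framing is ample if every non-idle edge lies on an exceptional route. -/
def Ample (F : G.Framing) : Prop :=
  ∀ e : G.E, ¬ G.Idle e → ∃ R : G.Route, G.Exceptional F R ∧ e ∈ R.edges

/-- `e` is smallest among the edges entering its target. -/
def MinIn (F : G.Framing) (e : G.E) : Prop :=
  ∀ f : G.E, G.tgt f = G.tgt e → f ≠ e → F.inlt e f

/-- `e` is largest among the edges entering its target. -/
def MaxIn (F : G.Framing) (e : G.E) : Prop :=
  ∀ f : G.E, G.tgt f = G.tgt e → f ≠ e → F.inlt f e

/-- `e` is smallest among the edges leaving its source. -/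
def MinOut (F : G.Framing) (e : G.E) : Prop :=
  ∀ f : G.E, G.src f = G.src e → f ≠ e → F.outlt e f

/-- `e` is largest among the edges leaving its source. -/
def MaxOut (F : G.Framing) (e : G.E) : Prop :=
  ∀ f : G.E, G.src f = G.src e → f ≠ e → F.outlt f e

/-- The characteristic vector of a route. -/
noncomputable def charVec (R : G.Route) : G.E → ℝ :=
  fun e => if e ∈ R.edges then 1 else 0

end DAG

namespace DAGaux

lemma head?_append_left {α : Type*} (l r : List α) (h : l ≠ []) :
    (l ++ r).head? = l.head? := by
  cases l with
  | nil => exact absurd rfl h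
  | cons a t => rfl

lemma list_split {α : Type*} : ∀ (l1 l2 : List α),
    l1 = l2 ∨ (∃ t, t ≠ [] ∧ l2 = l1 ++ t) ∨ (∃ t, t ≠ [] ∧ l1 = l2 ++ t) ∨
    ∃ (A : List α) (e f : α) (p q : List α),
      l1 = A ++ e :: p ∧ l2 = A ++ f :: q ∧ e ≠ f
  | [], [] => Or.inl rfl
  | [], b :: l2 => Or.inr (Or.inl ⟨b :: l2, by simp, by simp⟩)
  | a :: l1, [] => Or.inr (Or.inr (Or.inl ⟨a :: l1, by simp, by simp⟩))
  | a :: l1, b :: l2 => by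
    by_cases hab : a = b
    · subst hab
      rcases list_split l1 l2 with h | ⟨t, ht, h⟩ | ⟨t, ht, h⟩ |
          ⟨A, e, f, p, q, h1, h2, hef⟩
      · exact Or.inl (by rw [h])
      · exact Or.inr (Or.inl ⟨t, ht, by rw [h]; rfl⟩)
      · exact Or.inr (Or.inr (Or.inl ⟨t, ht, by rw [h]; rfl⟩))
      · exact Or.inr (Or.inr (Or.inr ⟨a :: A, e, f, p, q, by rw [h1]; rfl,
          by rw [h2]; rfl, hef⟩))
    · exact Or.inr (Or.inr (Or.inr ⟨[], a, b, l1, l2, rfl, rfl, hab⟩))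

lemma route_ext {G : DAG} {R S : G.Route} (h : R.edges = S.edges) : R = S := by
  cases R; cases S; cases h; rfl

lemma wf_step (G : DAG) :
    WellFounded (fun a b : G.V => ∃ e : G.E, G.src e = a ∧ G.tgt e = b) := by
  have h1 : IsIrrefl G.V
      (Relation.TransGen (fun a b : G.V => ∃ e : G.E, G.src e = a ∧ G.tgt e = b)) :=
    ⟨G.acyclic⟩
  have h2 := Finite.wellFounded_of_trans_of_irrefl
    (Relation.TransGen (fun a b : G.V => ∃ e : G.E, G.src e = a ∧ G.tgt e = b))
  exact Subrelation.wf (fun h => Relation.TransGen.single h) h2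

/-- Every edge can be reached by a path starting at a source. -/
lemma back_path (G : DAG) (e : G.E) :
    ∃ L : List G.E, ((L ++ [e]).Chain' (fun a b => G.tgt a = G.src b)) ∧
      ∀ f ∈ (L ++ [e]).head?, G.IsSource (G.src f) := by
  suffices h : ∀ v : G.V, ∀ e : G.E, G.src e = v →
      ∃ L : List G.E, ((L ++ [e]).Chain' (fun a b => G.tgt a = G.src b)) ∧
        ∀ f ∈ (L ++ [e]).head?, G.IsSource (G.src f) from h _ e rfl
  intro v
  induction v using (wf_step G).induction with
  | _ v IH =>
    intro e hv
    by_cases hs : G.IsSource v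
    · exact ⟨[], List.isChain_singleton e, by simp [hv ▸ hs]⟩
    · obtain ⟨g, hg⟩ : ∃ g : G.E, G.tgt g = v := by
        by_contra hc; push_neg at hc; exact hs fun f => hc f
      obtain ⟨L, hL, hLh⟩ := IH (G.src g) ⟨g, rfl, hv ▸ hg⟩ g rfl
      refine ⟨L ++ [g], ?_, ?_⟩
      · refine List.isChain_append.mpr ⟨hL, List.isChain_singleton e, ?_⟩
        intro x hx y hy
        rw [List.getLast?_concat] at hx
        simp only [List.head?_cons, Option.mem_some_iff] at hx hy
        rw [← hx, ← hy, hg, hv]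
      · rw [head?_append_left (L ++ [g]) [e] (by simp)]
        exact hLh

/-- Build a route from a source-path ending in `g` and a tail `t`. -/
lemma mk_route (G : DAG) (L : List G.E) (g : G.E) (t : List G.E)
    (hc1 : (L ++ [g]).Chain' (fun a b => G.tgt a = G.src b))
    (hh : ∀ f ∈ (L ++ [g]).head?, G.IsSource (G.src f))
    (hc2 : t.Chain' (fun a b => G.tgt a = G.src b))
    (ht : t ≠ [])
    (hlink : G.tgt g = G.src (t.head ht))
    (hsink : G.IsSink (G.tgt (t.getLast ht))) :
    ∃ R : G.Route, R.edges = (L ++ [g]) ++ t := by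
  have hne : (L ++ [g]) ++ t ≠ [] := by simp [ht]
  have hchain : ((L ++ [g]) ++ t).Chain' (fun a b => G.tgt a = G.src b) := by
    refine List.isChain_append.mpr ⟨hc1, hc2, ?_⟩
    intro x hx y hy
    rw [List.getLast?_concat] at hx
    rw [List.head?_eq_head ht] at hy
    simp only [Option.mem_some_iff] at hx hy
    rw [← hx, ← hy]; exact hlink
  have hhead : ((L ++ [g]) ++ t).head hne = (L ++ [g]).head (by simp) := by
    have := head?_append_left (L ++ [g]) t (by simp)
    rw [List.head?_eq_head hne, List.head?_eq_head (show L ++ [g] ≠ [] by simp)] at this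
    exact Option.some.inj this
  have hlast : ((L ++ [g]) ++ t).getLast hne = t.getLast ht := by
    rw [List.getLast_append]
    simp [ht]
  refine ⟨⟨(L ++ [g]) ++ t, hne, hchain, ?_, ?_⟩, rfl⟩
  · rw [hhead]
    exact hh _ (by rw [List.head?_eq_head (show L ++ [g] ≠ [] by simp)]; rfl)
  · rw [hlast]; exact hsink

lemma sink_suffix (G : DAG) (R : G.Route) (B t : List G.E) (ht : t ≠ [])
    (h : R.edges = B ++ t) : G.IsSink (G.tgt (t.getLast ht)) := by
  have h1 := List.getLast?_eq_getLast (l := R.edges) R.ne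
  have h2 : R.edges.getLast? = t.getLast? := by
    rw [h]; exact List.getLast?_append_of_ne_nil _ ht
  rw [h2, List.getLast?_eq_getLast (l := t) ht] at h1
  have h3 : t.getLast ht = R.edges.getLast R.ne := Option.some.inj h1
  rw [h3]
  exact R.sink_end

lemma not_prefix (G : DAG) (R S : G.Route) (t : List G.E) (ht : t ≠ [])
    (h : S.edges = R.edges ++ t) : False := by
  have hc : (R.edges ++ t).Chain' (fun a b => G.tgt a = G.src b) := h ▸ S.chain
  have hl := (List.isChain_append.mp hc).2.2 (R.edges.getLast R.ne)
    (by rw [List.getLast?_eq_getLast (l := R.edges) R.ne]; rfl)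
    (t.head ht) (by rw [List.head?_eq_head ht]; rfl)
  exact R.sink_end (t.head ht) hl.symm

lemma no_div (G : DAG) (F : G.Framing) (hfull : G.Full)
    (R S : G.Route) (hR : G.Exceptional F R) (hS : G.Exceptional F S)
    (A : List G.E) (e f : G.E) (p q : List G.E) (hA : A ≠ [])
    (hRe : R.edges = A ++ e :: p) (hSe : S.edges = A ++ f :: q)
    (hef : e ≠ f) (hout : F.outlt e f) : False := by
  set g := A.getLast hA with hgdef
  have hAsplit : A.dropLast ++ [g] = A := List.dropLast_append_getLast hA
  have hge : G.tgt g = G.src e := by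
    have h := (List.isChain_append.mp (hRe ▸ R.chain)).2.2
    exact h g (by rw [List.getLast?_eq_getLast (l := A) hA]; rfl) e rfl
  have hgf : G.tgt g = G.src f := by
    have h := (List.isChain_append.mp (hSe ▸ S.chain)).2.2
    exact h g (by rw [List.getLast?_eq_getLast (l := A) hA]; rfl) f rfl
  have hinner : G.IsInner (G.tgt g) := ⟨fun hs => hs g rfl, fun hs => hs e hge.symm⟩
  have hcard : Fintype.card {x : G.E // G.tgt x = G.tgt g} = 2 := (hfull _ hinner).1
  obtain ⟨⟨g', hg't⟩, hg'ne⟩ :=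
    Fintype.exists_ne_of_one_lt_card (by rw [hcard]; omega)
      (⟨g, rfl⟩ : {x : G.E // G.tgt x = G.tgt g})
  have hgg' : g' ≠ g := fun h => hg'ne (Subtype.ext h)
  obtain ⟨L, hL, hLh⟩ := back_path G g'
  have hinner' : G.IsInner (G.tgt g') := by rw [hg't]; exact hinner
  rcases F.inlt_total g' g (by rw [hg't]) hinner' hgg' with hin | hin
  · -- inlt g' g : build R2 from L ++ [g'] ++ f :: q, conflict with R
    obtain ⟨R2, hR2⟩ := mk_route G L g' (f :: q) hL hLh
      ((List.isChain_append.mp (hSe ▸ S.chain)).2.1) (by simp)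
      (by rw [hg't]; exact hgf)
      (sink_suffix G S A (f :: q) (by simp) hSe)
    refine (hR R2).2 ⟨G.tgt g, L, f :: q, A.dropLast, e :: p, g', g, hR2, ?_,
      hg't, rfl, by simp, by simp, ?_, ?_⟩
    · rw [hAsplit]; exact hRe
    · exact ⟨L, A.dropLast, [], g', g, hgg', rfl, rfl, hin⟩
    · exact ⟨[], p, q, e, f, hef, rfl, rfl, hout⟩
  · -- inlt g g' : build R1 from L ++ [g'] ++ e :: p, conflict with S
    obtain ⟨R1, hR1⟩ := mk_route G L g' (e :: p) hL hLh
      ((List.isChain_append.mp (hRe ▸ R.chain)).2.1) (by simp)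
      (by rw [hg't]; exact hge)
      (sink_suffix G R A (e :: p) (by simp) hRe)
    refine (hS R1).1 ⟨G.tgt g, A.dropLast, f :: q, L, e :: p, g, g', ?_, hR1,
      rfl, hg't, by simp, by simp, ?_, ?_⟩
    · rw [hAsplit]; exact hSe
    · exact ⟨A.dropLast, L, [], g, g', hgg'.symm, rfl, rfl, hin⟩
    · exact ⟨[], p, q, e, f, hef, rfl, rfl, hout⟩

lemma head_inj (G : DAG) (F : G.Framing) (hfull : G.Full)
    (R S : G.Route) (hR : G.Exceptional F R) (hS : G.Exceptional F S)
    (hhead : R.edges.head R.ne = S.edges.head S.ne) : R = S := by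
  apply route_ext
  rcases list_split R.edges S.edges with h | ⟨t, ht, h⟩ | ⟨t, ht, h⟩ |
      ⟨A, e, f, p, q, h1, h2, hef⟩
  · exact h
  · exact (not_prefix G R S t ht h).elim
  · exact (not_prefix G S R t ht h).elim
  · exfalso
    rcases eq_or_ne A [] with hA | hA
    · subst hA
      simp only [List.nil_append] at h1 h2
      have h1' : R.edges.head? = some e := by rw [h1]; rfl
      have h2' : S.edges.head? = some f := by rw [h2]; rfl
      rw [List.head?_eq_head R.ne] at h1'
      rw [List.head?_eq_head S.ne] at h2'
      exact hef (by rw [← Option.some.inj h1', ← Option.some.inj h2', hhead])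
    · have hge : G.tgt (A.getLast hA) = G.src e := by
        have h := (List.isChain_append.mp (h1 ▸ R.chain)).2.2
        exact h _ (by rw [List.getLast?_eq_getLast (l := A) hA]; rfl) e rfl
      have hgf : G.tgt (A.getLast hA) = G.src f := by
        have h := (List.isChain_append.mp (h2 ▸ S.chain)).2.2
        exact h _ (by rw [List.getLast?_eq_getLast (l := A) hA]; rfl) f rfl
      have hinner : G.IsInner (G.src e) :=
        ⟨fun hs => hs (A.getLast hA) hge, fun hs => hs e rfl⟩
      rcases F.outlt_total e f (by rw [← hge, ← hgf]) hinner hef with ho | ho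
      · exact no_div G F hfull R S hR hS A e f p q hA h1 h2 hef ho
      · exact no_div G F hfull S R hS hR A f e q p hA h2 h1 hef.symm ho

lemma exists_route (G : DAG) (F : G.Framing) (hample : G.Ample F)
    (hnoidle : ∀ e : G.E, ¬ G.Idle e)
    (e : G.E) (hsrc : G.IsSource (G.src e)) :
    ∃ R : G.Route, G.Exceptional F R ∧ R.edges.head R.ne = e := by
  obtain ⟨R, hexc, hmem⟩ := hample e (hnoidle e)
  obtain ⟨s, t, hst⟩ := List.append_of_mem hmem
  rcases s with _ | ⟨a, s'⟩
  · refine ⟨R, hexc, ?_⟩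
    have h' : R.edges.head? = some e := by rw [hst]; rfl
    rw [List.head?_eq_head R.ne] at h'
    exact Option.some.inj h'.symm |>.symm
  · exfalso
    have hc : ((a :: s') ++ e :: t).Chain' (fun a b => G.tgt a = G.src b) :=
      hst ▸ R.chain
    have hl := (List.isChain_append.mp hc).2.2 ((a :: s').getLast (by simp))
      (by rw [List.getLast?_eq_getLast (l := (a :: s')) (by simp)]; rfl) e rfl
    exact hsrc _ hl

lemma fiber_card {E V : Type*} [Fintype E] [Fintype V] [DecidableEq V]
    (m : E → V) (P : V → Prop) [DecidablePred P] :
    (Finset.univ.filter fun e => P (m e)).card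
      = ∑ v ∈ Finset.univ.filter P, (Finset.univ.filter fun e => m e = v).card := by
  rw [Finset.card_eq_sum_card_fiberwise (f := m) (t := Finset.univ.filter P)
    (by intro e he; simp only [Finset.mem_coe, Finset.mem_filter, Finset.mem_univ, true_and] at he ⊢;
        exact he)]
  refine Finset.sum_congr rfl fun v hv => ?_
  congr 1
  ext a
  simp only [Finset.mem_filter, Finset.mem_univ, true_and] at hv ⊢
  exact ⟨fun h => h.2, fun h => ⟨h ▸ hv, h⟩⟩

lemma outdeg_eq (G : DAG) (v : G.V) :
    G.outdeg v = (Finset.univ.filter fun e => G.src e = v).card :=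
  Fintype.card_subtype _

lemma indeg_eq (G : DAG) (v : G.V) :
    G.indeg v = (Finset.univ.filter fun e => G.tgt e = v).card :=
  Fintype.card_subtype _

lemma source_edges_card (G : DAG) :
    (Finset.univ.filter fun e => G.IsSource (G.src e)).card
      = ∑ v ∈ Finset.univ.filter (fun v => G.IsSource v), G.outdeg v := by
  rw [fiber_card G.src G.IsSource]
  exact Finset.sum_congr rfl fun v _ => (outdeg_eq G v).symm

lemma sink_edges_card (G : DAG) :
    (Finset.univ.filter fun e => G.IsSink (G.tgt e)).card
      = ∑ v ∈ Finset.univ.filter (fun v => G.IsSink v), G.indeg v := by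
  rw [fiber_card G.tgt G.IsSink]
  exact Finset.sum_congr rfl fun v _ => (indeg_eq G v).symm

lemma source_sink_balance (G : DAG) (hfull : G.Full) :
    (Finset.univ.filter fun e => G.IsSource (G.src e)).card
      = (Finset.univ.filter fun e => G.IsSink (G.tgt e)).card := by
  have hsrc : (Finset.univ.filter fun e : G.E => ¬ G.IsSource (G.src e))
      = Finset.univ.filter fun e : G.E => G.IsInner (G.src e) := by
    ext e
    simp only [Finset.mem_filter, Finset.mem_univ, true_and]
    exact ⟨fun h => ⟨h, fun hs => hs e rfl⟩, fun h => h.1⟩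
  have htgt : (Finset.univ.filter fun e : G.E => ¬ G.IsSink (G.tgt e))
      = Finset.univ.filter fun e : G.E => G.IsInner (G.tgt e) := by
    ext e
    simp only [Finset.mem_filter, Finset.mem_univ, true_and]
    exact ⟨fun h => ⟨fun hs => hs e rfl, h⟩, fun h => h.2⟩
  have h1 : (Finset.univ.filter fun e : G.E => G.IsInner (G.src e)).card
      = 2 * (Finset.univ.filter G.IsInner).card := by
    rw [fiber_card G.src G.IsInner]
    have hc : ∀ v ∈ Finset.univ.filter G.IsInner,
        (Finset.univ.filter fun e => G.src e = v).card = 2 := fun v hv => by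
      rw [← outdeg_eq G v]; exact (hfull v (Finset.mem_filter.mp hv).2).2
    rw [Finset.sum_congr rfl hc, Finset.sum_const, smul_eq_mul, mul_comm]
  have h2 : (Finset.univ.filter fun e : G.E => G.IsInner (G.tgt e)).card
      = 2 * (Finset.univ.filter G.IsInner).card := by
    rw [fiber_card G.tgt G.IsInner]
    have hc : ∀ v ∈ Finset.univ.filter G.IsInner,
        (Finset.univ.filter fun e => G.tgt e = v).card = 2 := fun v hv => by
      rw [← indeg_eq G v]; exact (hfull v (Finset.mem_filter.mp hv).2).1
    rw [Finset.sum_congr rfl hc, Finset.sum_const, smul_eq_mul, mul_comm]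
  have e1 := Finset.card_filter_add_card_filter_not
    (s := (Finset.univ : Finset G.E)) (p := fun e => G.IsSource (G.src e))
  have e2 := Finset.card_filter_add_card_filter_not
    (s := (Finset.univ : Finset G.E)) (p := fun e => G.IsSink (G.tgt e))
  rw [hsrc, h1] at e1
  rw [htgt, h2] at e2
  omega

end DAGaux

/-- For a full DAG with an ample framing and no idle edges, the
number of exceptional routes equals the sum of out-degrees of the sources,
which in turn equals the sum of in-degrees of the sinks.  In particular this
number does not depend on the ample framing. -/
theorem card_exceptional_routes (G : DAG) (F : G.Framing)
    (hfull : G.Full) (hample : G.Ample F) (hnoidle : ∀ e : G.E, ¬ G.Idle e) :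
    Set.ncard {R : G.Route | G.Exceptional F R} =
      ∑ v ∈ Finset.univ.filter (fun v => G.IsSource v), G.outdeg v ∧
    Set.ncard {R : G.Route | G.Exceptional F R} =
      ∑ v ∈ Finset.univ.filter (fun v => G.IsSink v), G.indeg v := by
  have hbij : Nat.card {R : G.Route // G.Exceptional F R}
      = Nat.card {e : G.E // G.IsSource (G.src e)} := by
    apply Nat.card_eq_of_bijective
      (fun R => (⟨R.1.edges.head R.1.ne, R.1.source_start⟩ :
        {e : G.E // G.IsSource (G.src e)}))
    constructor
    · rintro ⟨R, hR⟩ ⟨S, hS⟩ h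
      exact Subtype.ext (DAGaux.head_inj G F hfull R S hR hS (congrArg Subtype.val h))
    · rintro ⟨e, he⟩
      obtain ⟨R, hexc, hhead⟩ := DAGaux.exists_route G F hample hnoidle e he
      exact ⟨⟨R, hexc⟩, Subtype.ext hhead⟩
  have hn : Set.ncard {R : G.Route | G.Exceptional F R}
      = ∑ v ∈ Finset.univ.filter (fun v => G.IsSource v), G.outdeg v := by
    rw [← Nat.card_coe_set_eq]
    have h0 : Nat.card ↥{R : G.Route | G.Exceptional F R}
        = Nat.card {R : G.Route // G.Exceptional F R} := rfl
    rw [h0, hbij, Nat.card_eq_fintype_card, Fintype.card_subtype,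
      DAGaux.source_edges_card]
  refine ⟨hn, ?_⟩
  rw [hn, ← DAGaux.source_edges_card, DAGaux.source_sink_balance G hfull,
    DAGaux.sink_edges_card]
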